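/- Let m, j, l be positive integers with l ≥ j ≥ 2, and let C_0, …, C_j be defined by ∏_{i=1}^j (l+k+m−j+i) = C_0 + Σ_{i=1}^j C_i ∏_{λ=0}^{i−1}(k+m−λ). Set Q_{j−1} = (m!/((j−1+m)!)) · [(l+j−1+m)!/((l−1+m)!) − ((j+m)!·(l+m))/((1+m)!)]. Then Q_{j−1} − Σ_{i=0}^{j−2} C_i · m!/((j−i−1+m)!) = m(j−1)(l−1)/(m+1). -/

import Mathlib

open Finset Polynomial


lemma prodDesc (a : ℕ) : ∀ i : ℕ, i ≤ a → ∏ x ∈ Finset.range i, ((a:ℂ) - x) = (a.factorial : ℂ) / ((a - i).factorial : ℂ) := by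
  intro i
  induction i with
  | zero => simp [div_self (Nat.cast_ne_zero.mpr (Nat.factorial_pos a).ne' : ((a.factorial : ℕ) : ℂ) ≠ 0)]
  | succ n ih =>
    intro h
    have h1 : n ≤ a := by omega
    rw [Finset.prod_range_succ, ih h1]
    have hc : ((a:ℂ) - n) = ((a - n : ℕ) : ℂ) := by rw [Nat.cast_sub h1]
    have hfac : (a - n).factorial = (a - n) * (a - (n+1)).factorial := by
      have h2 : a - n = (a - (n+1)) + 1 := by omega
      rw [h2, Nat.factorial_succ, ← h2]
    have hz1 : ((a - n : ℕ) : ℂ) ≠ 0 := Nat.cast_ne_zero.mpr (by omega)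
    have hz2 : (((a - (n+1)).factorial : ℕ) : ℂ) ≠ 0 := Nat.cast_ne_zero.mpr (Nat.factorial_pos _).ne'
    have hz1' : ((a:ℂ) - n) ≠ 0 := by rw [hc]; exact hz1
    rw [hfac, Nat.cast_mul, ← hc, mul_comm ((a:ℂ) - n), ← div_div,
      div_mul_cancel₀ _ hz1']

lemma prodAsc (b : ℕ) : ∀ n : ℕ, ∏ i ∈ Finset.Icc 1 n, ((b:ℂ) + i) = ((b+n).factorial : ℂ) / (b.factorial : ℂ) := by
  intro n
  induction n with
  | zero => simp [div_self (Nat.cast_ne_zero.mpr (Nat.factorial_pos b).ne' : ((b.factorial : ℕ) : ℂ) ≠ 0)]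
  | succ n ih =>
    rw [Finset.prod_Icc_succ_top (by omega), ih]
    have hz : ((b.factorial : ℕ) : ℂ) ≠ 0 := Nat.cast_ne_zero.mpr (Nat.factorial_pos _).ne'
    rw [show b + (n+1) = (b+n) + 1 by ring, Nat.factorial_succ]
    push_cast
    field_simp
    ring

lemma sumAsc (c : ℂ) : ∀ n : ℕ, ∑ i ∈ Finset.Icc 1 n, (c + i) = n * c + n * (n+1) / 2 := by
  intro n
  induction n with
  | zero => simp
  | succ n ih =>
    rw [Finset.sum_Icc_succ_top (by omega), ih]
    push_cast
    ring

lemma sumDesc (d : ℂ) : ∀ n : ℕ, ∑ x ∈ Finset.range n, (d - x) = n * d - n * (n-1) / 2 := by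
  intro n
  induction n with
  | zero => simp
  | succ n ih =>
    rw [Finset.sum_range_succ, ih]
    push_cast
    ring

lemma polyId (m j l : ℕ) (C : ℕ → ℂ)
    (hC : ∀ k : ℕ, ∏ i ∈ Finset.Icc 1 j, ((l : ℂ) + k + m - j + i)
      = C 0 + ∑ i ∈ Finset.Icc 1 j, C i * ∏ x ∈ Finset.range i, ((k : ℂ) + m - x)) :
    (∏ i ∈ Finset.Icc 1 j, (X + Polynomial.C ((l:ℂ) + m - j + i)))
      = ∑ i ∈ Finset.range (j+1), Polynomial.C (C i) * ∏ x ∈ Finset.range i, (X + Polynomial.C ((m:ℂ) - x)) := by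
  apply Polynomial.eq_of_infinite_eval_eq
  refine Set.Infinite.mono ?_ (Set.infinite_range_of_injective (Nat.cast_injective : Function.Injective (Nat.cast : ℕ → ℂ)))
  rintro x ⟨k, rfl⟩
  simp only [Set.mem_setOf_eq, eval_prod, eval_finset_sum, eval_mul, eval_add, eval_X, eval_C]
  have hrange : Finset.range (j+1) = insert 0 (Finset.Icc 1 j) := by
    ext x; simp [Nat.lt_succ_iff]; omega
  rw [hrange, Finset.sum_insert (by simp)]
  simp only [Finset.range_zero, Finset.prod_empty, mul_one]
  have hL : ∏ i ∈ Finset.Icc 1 j, ((k:ℂ) + ((l:ℂ) + m - j + i)) = ∏ i ∈ Finset.Icc 1 j, ((l : ℂ) + k + m - j + i) := by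
    apply Finset.prod_congr rfl; intro i _; ring
  have hR : ∀ i : ℕ, ∏ x ∈ Finset.range i, ((k:ℂ) + ((m:ℂ) - x)) = ∏ x ∈ Finset.range i, ((k : ℂ) + m - x) := by
    intro i; apply Finset.prod_congr rfl; intro x _; ring
  rw [hL, hC k]
  congr 1
  apply Finset.sum_congr rfl
  intro i _
  rw [hR]

lemma coeffVals (m jj l : ℕ) (C : ℕ → ℂ)
    (hP : (∏ i ∈ Finset.Icc 1 (jj+2), (X + Polynomial.C ((l:ℂ) + m - ((jj+2 : ℕ) : ℂ) + i)))
      = ∑ i ∈ Finset.range (jj+2+1), Polynomial.C (C i) * ∏ x ∈ Finset.range i, (X + Polynomial.C ((m:ℂ) - x))) :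
    C (jj+2) = 1 ∧ C (jj+1) = ((jj:ℂ)+2) * l := by
  have hmono : ∀ i : ℕ, (∏ x ∈ Finset.range i, (X + Polynomial.C ((m:ℂ) - x))).Monic :=
    fun i => monic_prod_of_monic _ _ fun x _ => monic_X_add_C _
  have hdeg : ∀ i : ℕ, (∏ x ∈ Finset.range i, (X + Polynomial.C ((m:ℂ) - x))).natDegree = i := by
    intro i
    rw [Polynomial.natDegree_prod _ _ (fun x _ => (monic_X_add_C _).ne_zero)]
    simp only [Polynomial.natDegree_X_add_C, Finset.sum_const, smul_eq_mul, mul_one,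
      Finset.card_range]
  have hcoe : ∀ i : ℕ, (∏ x ∈ Finset.range i, (X + Polynomial.C ((m:ℂ) - x))).coeff i = 1 := by
    intro i
    have h := (hmono i).coeff_natDegree
    rwa [hdeg] at h
  have hPmono : (∏ i ∈ Finset.Icc 1 (jj+2), (X + Polynomial.C ((l:ℂ) + m - ((jj+2 : ℕ) : ℂ) + i))).Monic :=
    monic_prod_of_monic _ _ fun i _ => monic_X_add_C _
  have hPdeg : (∏ i ∈ Finset.Icc 1 (jj+2), (X + Polynomial.C ((l:ℂ) + m - ((jj+2 : ℕ) : ℂ) + i))).natDegree = jj+2 := by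
    rw [Polynomial.natDegree_prod _ _ (fun x _ => (monic_X_add_C _).ne_zero)]
    simp only [Polynomial.natDegree_X_add_C, Finset.sum_const, smul_eq_mul, mul_one,
      Nat.card_Icc]
    omega
  have hPcoe : (∏ i ∈ Finset.Icc 1 (jj+2), (X + Polynomial.C ((l:ℂ) + m - ((jj+2 : ℕ) : ℂ) + i))).coeff (jj+2) = 1 := by
    have h := hPmono.coeff_natDegree
    rwa [hPdeg] at h
  have htop : C (jj+2) = 1 := by
    have h := congrArg (fun p : ℂ[X] => p.coeff (jj+2)) hP
    simp only [Polynomial.finset_sum_coeff, Polynomial.coeff_C_mul] at h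
    rw [hPcoe, Finset.sum_eq_single_of_mem (jj+2) (by simp [Finset.mem_range])] at h
    · rw [hcoe, mul_one] at h
      exact h.symm
    · intro b hb hne
      rw [Polynomial.coeff_eq_zero_of_natDegree_lt, mul_zero]
      rw [hdeg]
      simp only [Finset.mem_range] at hb
      omega
  have hnext : C (jj+1) = ((jj:ℂ)+2) * l := by
    have h := congrArg (fun p : ℂ[X] => p.coeff (jj+1)) hP
    simp only [Polynomial.finset_sum_coeff, Polynomial.coeff_C_mul] at h
    have hL : (∏ i ∈ Finset.Icc 1 (jj+2), (X + Polynomial.C ((l:ℂ) + m - ((jj+2 : ℕ) : ℂ) + i))).coeff (jj+1)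
        = ∑ i ∈ Finset.Icc 1 (jj+2), ((l:ℂ) + m - ((jj+2 : ℕ) : ℂ) + i) := by
      have h1 := Polynomial.Monic.nextCoeff_prod (Finset.Icc 1 (jj+2))
        (fun i => X + Polynomial.C ((l:ℂ) + m - ((jj+2 : ℕ) : ℂ) + i)) (fun i _ => monic_X_add_C _)
      rw [Polynomial.nextCoeff_of_natDegree_pos (by rw [hPdeg]; omega), hPdeg,
        Finset.sum_congr rfl (fun i _ => Polynomial.nextCoeff_X_add_C _)] at h1
      exact h1
    have hc2 : (∏ x ∈ Finset.range (jj+2), (X + Polynomial.C ((m:ℂ) - x))).coeff (jj+1)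
        = ∑ x ∈ Finset.range (jj+2), ((m:ℂ) - x) := by
      have h1 := Polynomial.Monic.nextCoeff_prod (Finset.range (jj+2))
        (fun x => X + Polynomial.C ((m:ℂ) - x)) (fun x _ => monic_X_add_C _)
      rw [Polynomial.nextCoeff_of_natDegree_pos (by rw [hdeg]; omega), hdeg,
        Finset.sum_congr rfl (fun x _ => Polynomial.nextCoeff_X_add_C _)] at h1
      exact h1
    rw [hL, Finset.sum_range_succ, Finset.sum_range_succ] at h
    have hz : ∑ x ∈ Finset.range (jj+1),
        C x * (∏ y ∈ Finset.range x, (X + Polynomial.C ((m:ℂ) - y))).coeff (jj+1) = 0 := by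
      apply Finset.sum_eq_zero
      intro b hb
      rw [Polynomial.coeff_eq_zero_of_natDegree_lt, mul_zero]
      rw [hdeg]
      simp only [Finset.mem_range] at hb
      omega
    rw [hz, hcoe, hc2, htop, one_mul, mul_one, zero_add] at h
    rw [sumAsc, sumDesc] at h
    push_cast at h ⊢
    linear_combination -h
  exact ⟨htop, hnext⟩


theorem stmt8 (m j l : ℕ) (hm : 0 < m) (hj : 2 ≤ j) (hl : j ≤ l) (C : ℕ → ℂ)
    (hC : ∀ k : ℕ, ∏ i ∈ Finset.Icc 1 j, ((l : ℂ) + k + m - j + i)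
      = C 0 + ∑ i ∈ Finset.Icc 1 j, C i * ∏ x ∈ Finset.range i, ((k : ℂ) + m - x)) :
    ((Nat.factorial m : ℂ) / (Nat.factorial (j - 1 + m) : ℂ)) *
        ((Nat.factorial (l + j - 1 + m) : ℂ) / (Nat.factorial (l - 1 + m) : ℂ)
          - ((Nat.factorial (j + m) : ℂ) * ((l : ℂ) + m)) / (Nat.factorial (1 + m) : ℂ))
      - ∑ i ∈ Finset.range (j - 1),
          C i * ((Nat.factorial m : ℂ) / (Nat.factorial (j - i - 1 + m) : ℂ))
    = (m : ℂ) * ((j : ℂ) - 1) * ((l : ℂ) - 1) / ((m : ℂ) + 1) := by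
  obtain ⟨m', rfl⟩ : ∃ m', m = m' + 1 := ⟨m - 1, by omega⟩
  obtain ⟨jj, rfl⟩ : ∃ jj, j = jj + 2 := ⟨j - 2, by omega⟩
  obtain ⟨ll, rfl⟩ : ∃ ll, l = ll + 2 := ⟨l - 2, by omega⟩
  obtain ⟨hCtop, hCnext⟩ := coeffVals (m'+1) jj (ll+2) C (polyId (m'+1) (jj+2) (ll+2) C hC)
  have hfa : ∀ n : ℕ, ((n.factorial : ℕ) : ℂ) ≠ 0 :=
    fun n => Nat.cast_ne_zero.mpr (Nat.factorial_pos n).ne'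
  have hE : (((ll+jj+m'+4).factorial : ℕ) : ℂ) / (((ll+m'+2).factorial : ℕ) : ℂ)
      = C 0 + ∑ i ∈ Finset.Icc 1 (jj+2),
          C i * ((((jj+m'+2).factorial : ℕ) : ℂ) / ((((jj+m'+2) - i).factorial : ℕ) : ℂ)) := by
    have h := hC (jj+1)
    rw [Finset.prod_congr rfl (fun i (_ : i ∈ Finset.Icc 1 (jj+2)) =>
      show ((ll+2:ℕ):ℂ) + ((jj+1:ℕ):ℂ) + ((m'+1:ℕ):ℂ) - ((jj+2:ℕ):ℂ) + (i:ℂ)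
        = ((ll+m'+2 : ℕ):ℂ) + (i:ℂ) from by push_cast; ring)] at h
    rw [prodAsc (ll+m'+2) (jj+2), show ll+m'+2+(jj+2) = ll+jj+m'+4 from by omega] at h
    rw [h]
    congr 1
    apply Finset.sum_congr rfl
    intro i hi
    congr 1
    rw [Finset.prod_congr rfl (fun x (_ : x ∈ Finset.range i) =>
      show ((jj+1:ℕ):ℂ) + ((m'+1:ℕ):ℂ) - (x:ℂ) = ((jj+m'+2:ℕ):ℂ) - (x:ℂ) from by push_cast; ring)]
    refine prodDesc (jj+m'+2) i ?_
    simp only [Finset.mem_Icc] at hi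
    omega
  have hsum : ∑ i ∈ Finset.range (jj+2-1),
        C i * ((((m'+1).factorial : ℕ) : ℂ) / (((jj+2-i-1+(m'+1)).factorial : ℕ) : ℂ))
      = (∑ i ∈ Finset.range (jj+1),
          C i * ((((jj+m'+2).factorial : ℕ) : ℂ) / ((((jj+m'+2) - i).factorial : ℕ) : ℂ)))
        * ((((m'+1).factorial : ℕ) : ℂ) / (((jj+m'+2).factorial : ℕ) : ℂ)) := by
    rw [show jj+2-1 = jj+1 from rfl, Finset.sum_mul]
    apply Finset.sum_congr rfl
    intro i hi
    simp only [Finset.mem_range] at hi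
    rw [show jj+2-i-1+(m'+1) = (jj+m'+2) - i from by omega, mul_assoc]
    congr 1
    have h1 := hfa ((jj+m'+2) - i)
    have h2 := hfa (jj+m'+2)
    field_simp
  have hz4 : ((m':ℂ)+1) ≠ 0 := by
    have : ((m'+1 : ℕ):ℂ) ≠ 0 := Nat.cast_ne_zero.mpr (by omega)
    push_cast at this
    exact this
  have hX : (((m'+1).factorial : ℕ) : ℂ) = ((m':ℂ)+1) * ((Nat.factorial m' : ℕ) : ℂ) := by
    rw [Nat.factorial_succ]
    push_cast
    ring
  have hsplit : ∑ i ∈ Finset.range (jj+1),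
        C i * ((((jj+m'+2).factorial : ℕ) : ℂ) / ((((jj+m'+2) - i).factorial : ℕ) : ℂ))
      = (((ll+jj+m'+4).factorial : ℕ) : ℂ) / (((ll+m'+2).factorial : ℕ) : ℂ)
        - C (jj+1) * ((((jj+m'+2).factorial : ℕ) : ℂ) / (((m'+1).factorial : ℕ) : ℂ))
        - C (jj+2) * (((m':ℂ)+1) * (((jj+m'+2).factorial : ℕ) : ℂ) / (((m'+1).factorial : ℕ) : ℂ)) := by
    have hr : C 0 + ∑ i ∈ Finset.Icc 1 (jj+2),
          C i * ((((jj+m'+2).factorial : ℕ) : ℂ) / ((((jj+m'+2) - i).factorial : ℕ) : ℂ))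
        = ∑ i ∈ Finset.range (jj+3),
          C i * ((((jj+m'+2).factorial : ℕ) : ℂ) / ((((jj+m'+2) - i).factorial : ℕ) : ℂ)) := by
      rw [show Finset.range (jj+3) = insert 0 (Finset.Icc 1 (jj+2)) from by
        ext x; simp [Nat.lt_succ_iff]; omega, Finset.sum_insert (by simp)]
      congr 1
      simp [div_self (hfa _)]
    have hsplit3 : ∑ i ∈ Finset.range (jj+3),
          C i * ((((jj+m'+2).factorial : ℕ) : ℂ) / ((((jj+m'+2) - i).factorial : ℕ) : ℂ))
        = (∑ i ∈ Finset.range (jj+1),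
            C i * ((((jj+m'+2).factorial : ℕ) : ℂ) / ((((jj+m'+2) - i).factorial : ℕ) : ℂ)))
          + C (jj+1) * ((((jj+m'+2).factorial : ℕ) : ℂ) / ((((jj+m'+2) - (jj+1)).factorial : ℕ) : ℂ))
          + C (jj+2) * ((((jj+m'+2).factorial : ℕ) : ℂ) / ((((jj+m'+2) - (jj+2)).factorial : ℕ) : ℂ)) := by
      rw [Finset.sum_range_succ, Finset.sum_range_succ]
    have hterm : (((jj+m'+2).factorial : ℕ) : ℂ) / ((Nat.factorial m' : ℕ) : ℂ)
        = ((m':ℂ)+1) * (((jj+m'+2).factorial : ℕ) : ℂ) / (((m'+1).factorial : ℕ) : ℂ) := by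
      rw [hX]
      exact (mul_div_mul_left _ _ hz4).symm
    rw [hE, hr, hsplit3,
      show jj+m'+2 - (jj+1) = m'+1 from by omega, show jj+m'+2 - (jj+2) = m' from by omega,
      hterm]
    ring
  rw [show ll+2+(jj+2)-1+(m'+1) = ll+jj+m'+4 from by omega,
      show jj+2-1+(m'+1) = jj+m'+2 from by omega,
      show ll+2-1+(m'+1) = ll+m'+2 from by omega]
  rw [hsum, hsplit, hCtop, hCnext]
  have hXA : (((jj+2+(m'+1)).factorial : ℕ) : ℂ) = ((jj:ℂ)+(m':ℂ)+3) * (((jj+m'+2).factorial : ℕ) : ℂ) := by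
    rw [show jj+2+(m'+1) = (jj+m'+2)+1 from by omega, Nat.factorial_succ]
    push_cast
    ring
  have h1m : (((1+(m'+1)).factorial : ℕ) : ℂ) = ((m':ℂ)+2) * (((m'+1).factorial : ℕ) : ℂ) := by
    rw [show 1+(m'+1) = (m'+1)+1 from by omega, Nat.factorial_succ]
    push_cast
    ring
  rw [hXA, h1m]
  have hz1 := hfa (jj+m'+2)
  have hz2 := hfa (ll+m'+2)
  have hz3 := hfa m'
  have hz5 : ((m':ℂ)+2) ≠ 0 := by
    have : ((m'+2 : ℕ):ℂ) ≠ 0 := Nat.cast_ne_zero.mpr (by omega)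
    push_cast at this
    exact this
  have hzX := hfa (m'+1)
  push_cast at hz1 hz2 hz3 hzX ⊢
  rw [← div_div]
  linear_combination
    ((-(((jj:ℂ)+(m':ℂ)+3)*(((ll:ℂ)+2)+((m':ℂ)+1))))*((m':ℂ)+2)⁻¹
        + (((jj:ℂ)+2)*((ll:ℂ)+2)+((m':ℂ)+1)))
      * (((m'+1).factorial : ℕ) : ℂ) * ((((m'+1).factorial : ℕ) : ℂ))⁻¹ * (mul_inv_cancel₀ hz1)
    + ((-(((jj:ℂ)+(m':ℂ)+3)*(((ll:ℂ)+2)+((m':ℂ)+1))))*((m':ℂ)+2)⁻¹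
        + (((jj:ℂ)+2)*((ll:ℂ)+2)+((m':ℂ)+1))) * (mul_inv_cancel₀ hzX)
    - ((((jj:ℂ)+2)*((ll:ℂ)+2)+((m':ℂ)+1)) * (mul_inv_cancel₀ hz5))
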